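/- Let R be a commutative ring and P ∈ R[X_1,...,X_m][Y] a polynomial. Then the element ∑_{k=1}^m P(X_k) / ∏_{j≠k}(X_k - X_j), computed in the fraction field of R[X_1,...,X_m] (with X_i indeterminates), lies in R[X_1,...,X_m]. -/

import Mathlib

open Finset Polynomial

/-- For a domain `R` and `P ∈ R[X_1,…,X_m][Y]`, the Lagrange sum
`∑ₖ P(Xₖ) / ∏_{j≠k} (Xₖ - Xⱼ)`, computed in the fraction field of
`R[X_1,…,X_m]`, lies in (the image of) `R[X_1,…,X_m]`. -/
theorem stmt2 (R : Type*) [CommRing R] [IsDomain R] (m : ℕ)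
    (P : Polynomial (MvPolynomial (Fin m) R)) :
    let S := MvPolynomial (Fin m) R
    let K := FractionRing S
    let X : Fin m → K := fun k => algebraMap S K (MvPolynomial.X k)
    ∃ q : S,
      ∑ k : Fin m,
          algebraMap S K (P.eval (MvPolynomial.X k)) /
            ∏ j ∈ Finset.univ.erase k, (X k - X j) =
        algebraMap S K q := by
  intro S K X
  -- injectivity
  have halg : Function.Injective (algebraMap S K) := IsFractionRing.injective S K
  have hXinj : Function.Injective X := by
    intro a b h
    exact MvPolynomial.X_injective (halg h)
  have hXne : ∀ {a b : Fin m}, a ≠ b → X a - X b ≠ 0 := by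
    intro a b hab
    exact sub_ne_zero_of_ne (fun h => hab (hXinj h))
  -- the nodal polynomial over S
  set W : Polynomial S := ∏ k : Fin m, (Polynomial.X - Polynomial.C (MvPolynomial.X k)) with hW
  have hWmonic : W.Monic := by
    rw [hW]; exact monic_prod_of_monic _ _ fun k _ => monic_X_sub_C _
  have hWdeg : W.natDegree = m := by
    rw [hW, natDegree_prod_of_monic _ _ (fun k _ => monic_X_sub_C _)]
    simp
  set T : Polynomial S := P %ₘ W with hT
  refine ⟨T.coeff (m - 1), ?_⟩
  -- evaluations agree
  have hevalW : ∀ k : Fin m, W.eval (MvPolynomial.X k) = 0 := by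
    intro k
    rw [hW, eval_prod]
    exact Finset.prod_eq_zero (Finset.mem_univ k) (by simp)
  have hevalT : ∀ k : Fin m, T.eval (MvPolynomial.X k) = P.eval (MvPolynomial.X k) := by
    intro k
    conv_rhs => rw [← modByMonic_add_div P W]
    simp [hevalW k, hT]
  -- map T to K
  set f : Polynomial K := T.map (algebraMap S K) with hf
  have hfdeg : f.degree < (Finset.univ : Finset (Fin m)).card := by
    calc f.degree ≤ T.degree := degree_map_le
    _ < W.degree := degree_modByMonic_lt P hWmonic
    _ = m := by rw [degree_eq_natDegree hWmonic.ne_zero, hWdeg]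
    _ = (Finset.univ : Finset (Fin m)).card := by simp
  have hinjOn : Set.InjOn X (Finset.univ : Finset (Fin m)) := hXinj.injOn
  have hinterp : f = Lagrange.interpolate Finset.univ X (fun k => f.eval (X k)) :=
    Lagrange.eq_interpolate hinjOn hfdeg
  -- coefficient of basis polynomial
  have hbasis : ∀ k : Fin m, (Lagrange.basis Finset.univ X k).coeff (m - 1)
      = (∏ j ∈ Finset.univ.erase k, (X k - X j))⁻¹ := by
    intro k
    have hnd : (Lagrange.basis Finset.univ X k).natDegree = m - 1 := by
      simpa using Lagrange.natDegree_basis hinjOn (Finset.mem_univ k)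
    rw [← hnd, ← leadingCoeff, Lagrange.basis, leadingCoeff_prod, ← Finset.prod_inv_distrib]
    refine Finset.prod_congr rfl fun j hj => ?_
    have hne : X k - X j ≠ 0 := hXne (Finset.mem_erase.mp hj).1.symm
    rw [Lagrange.basisDivisor, leadingCoeff_mul, leadingCoeff_C, (monic_X_sub_C _).leadingCoeff,
      mul_one]
  -- compute coeff (m-1) of f two ways
  have hcoef : f.coeff (m - 1) = ∑ k : Fin m,
      (f.eval (X k)) / ∏ j ∈ Finset.univ.erase k, (X k - X j) := by
    conv_lhs => rw [hinterp]
    rw [Lagrange.interpolate_apply, finset_sum_coeff]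
    refine Finset.sum_congr rfl fun k _ => ?_
    rw [coeff_C_mul, hbasis k, div_eq_mul_inv]
  have hevalf : ∀ k : Fin m, f.eval (X k) = algebraMap S K (P.eval (MvPolynomial.X k)) := by
    intro k
    rw [hf, eval_map, ← hevalT k]
    exact eval₂_at_apply _ _
  calc ∑ k : Fin m, algebraMap S K (P.eval (MvPolynomial.X k)) /
        ∏ j ∈ Finset.univ.erase k, (X k - X j)
      = ∑ k : Fin m, (f.eval (X k)) / ∏ j ∈ Finset.univ.erase k, (X k - X j) := by
        refine Finset.sum_congr rfl fun k _ => ?_; rw [hevalf k]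
    _ = f.coeff (m - 1) := hcoef.symm
    _ = algebraMap S K (T.coeff (m - 1)) := by rw [hf, coeff_map]
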